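/- Let α, ω > 0 and λ > 0 with α² < 4λ; set η = √(α²/4 − λ) = i√(λ − α²/4), Δ_± = −α/2 ± η, and define f_n(λ) = ((Δ₊)ⁿ − (Δ₋)ⁿ)/(2η) for n ≥ 2. Then f_n(λ) is a polynomial in λ whose leading term is (−λ)^{(n−1)/2} when n is odd and (−1)^{n/2}(n/2)α·λ^{(n−2)/2} when n is even. -/

import Mathlib

open Complex

noncomputable def Pn (α : ℝ) : ℕ → Polynomial ℝ
  | 0 => 0
  | 1 => 1
  | (n + 2) => Polynomial.C (-α) * Pn α (n + 1) - Polynomial.X * Pn α n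

lemma Pn_eval (α : ℝ) (lam : ℝ) (η : ℂ) (hη : η ≠ 0)
    (h : η ^ 2 = ((α ^ 2 / 4 - lam : ℝ) : ℂ)) : ∀ n : ℕ,
    ((-(α : ℂ) / 2 + η) ^ n - (-(α : ℂ) / 2 - η) ^ n) / (2 * η)
      = (((Pn α n).eval lam : ℝ) : ℂ) := by
  have h2η : (2 : ℂ) * η ≠ 0 := by
    simp [hη]
  intro n
  induction n using Nat.twoStepInduction with
  | zero => simp [Pn]
  | one =>
    simp only [pow_one, Pn, Polynomial.eval_one]
    field_simp
    push_cast
    ring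
  | more n ih0 ih1 =>
    set a : ℂ := -(α : ℂ) / 2 + η with ha_def
    set b : ℂ := -(α : ℂ) / 2 - η with hb_def
    have ha : a ^ 2 = -(α : ℂ) * a - lam := by
      rw [ha_def]
      push_cast at h ⊢
      linear_combination h
    have hb : b ^ 2 = -(α : ℂ) * b - lam := by
      rw [hb_def]
      push_cast at h ⊢
      linear_combination h
    have key : a ^ (n + 2) - b ^ (n + 2)
        = -(α : ℂ) * (a ^ (n + 1) - b ^ (n + 1)) - (lam : ℂ) * (a ^ n - b ^ n) := by
      linear_combination a ^ n * ha - b ^ n * hb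
    have split : (a ^ (n + 2) - b ^ (n + 2)) / (2 * η)
        = -(α : ℂ) * ((a ^ (n + 1) - b ^ (n + 1)) / (2 * η))
          - (lam : ℂ) * ((a ^ n - b ^ n) / (2 * η)) := by
      rw [key]; ring
    rw [split, ih0, ih1]
    simp only [Pn, Polynomial.eval_sub, Polynomial.eval_mul, Polynomial.eval_C,
      Polynomial.eval_X]
    push_cast
    ring

lemma Pn_deg (α : ℝ) (hα : α ≠ 0) : ∀ k : ℕ,
    (Pn α (2 * k + 1)).natDegree = k ∧ (Pn α (2 * k + 1)).leadingCoeff = (-1 : ℝ) ^ k ∧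
    (Pn α (2 * k + 2)).natDegree = k ∧
    (Pn α (2 * k + 2)).leadingCoeff = (-1 : ℝ) ^ (k + 1) * (k + 1) * α := by
  intro k
  induction k with
  | zero =>
    refine ⟨?_, ?_, ?_, ?_⟩ <;> simp [Pn]
  | succ k ih =>
    obtain ⟨hd1, hl1, hd2, hl2⟩ := ih
    -- odd case: Pn α (2k+3) = C(-α) * Pn α (2k+2) - X * Pn α (2k+1)
    have hodd_eq : Pn α (2 * (k + 1) + 1)
        = Polynomial.C (-α) * Pn α (2 * k + 2) - Polynomial.X * Pn α (2 * k + 1) := by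
      show Pn α (2 * k + 1 + 2) = _
      rw [Pn]
    have hcoeff_odd : (Pn α (2 * (k + 1) + 1)).coeff (k + 1) = (-1 : ℝ) ^ (k + 1) := by
      rw [hodd_eq, Polynomial.coeff_sub, Polynomial.coeff_C_mul, Polynomial.coeff_X_mul,
        Polynomial.coeff_eq_zero_of_natDegree_lt (by omega : (Pn α (2*k+2)).natDegree < k + 1)]
      have hc : (Pn α (2 * k + 1)).coeff k = (-1 : ℝ) ^ k := by
        have := hl1
        rwa [Polynomial.leadingCoeff, hd1] at this
      rw [hc]
      ring
    have hdegle_odd : (Pn α (2 * (k + 1) + 1)).natDegree ≤ k + 1 := by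
      rw [hodd_eq]
      refine le_trans (Polynomial.natDegree_sub_le _ _) (max_le ?_ ?_)
      · exact le_trans (Polynomial.natDegree_C_mul_le _ _) (by omega)
      · refine le_trans (Polynomial.natDegree_mul_le) ?_
        simp only [hd1, Polynomial.natDegree_X]
        omega
    have hd1' : (Pn α (2 * (k + 1) + 1)).natDegree = k + 1 := by
      refine Polynomial.natDegree_eq_of_le_of_coeff_ne_zero hdegle_odd ?_
      rw [hcoeff_odd]
      positivity
    have hl1' : (Pn α (2 * (k + 1) + 1)).leadingCoeff = (-1 : ℝ) ^ (k + 1) := by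
      rw [Polynomial.leadingCoeff, hd1', hcoeff_odd]
    -- even case: Pn α (2k+4) = C(-α) * Pn α (2k+3) - X * Pn α (2k+2)
    have heven_eq : Pn α (2 * (k + 1) + 2)
        = Polynomial.C (-α) * Pn α (2 * (k + 1) + 1) - Polynomial.X * Pn α (2 * k + 2) := by
      show Pn α (2 * k + 2 + 2) = _
      rw [Pn]
      norm_num [show 2 * k + 2 + 1 = 2 * (k + 1) + 1 by omega]
    have hcoeff_even : (Pn α (2 * (k + 1) + 2)).coeff (k + 1)
        = (-1 : ℝ) ^ (k + 2) * (k + 2) * α := by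
      rw [heven_eq, Polynomial.coeff_sub, Polynomial.coeff_C_mul, Polynomial.coeff_X_mul]
      have h1 : (Pn α (2 * (k + 1) + 1)).coeff (k + 1) = (-1 : ℝ) ^ (k + 1) := hcoeff_odd
      have h2 : (Pn α (2 * k + 2)).coeff k = (-1 : ℝ) ^ (k + 1) * (k + 1) * α := by
        have := hl2
        rwa [Polynomial.leadingCoeff, hd2] at this
      rw [h1, h2]
      push_cast
      ring
    have hdegle_even : (Pn α (2 * (k + 1) + 2)).natDegree ≤ k + 1 := by
      rw [heven_eq]
      refine le_trans (Polynomial.natDegree_sub_le _ _) (max_le ?_ ?_)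
      · exact le_trans (Polynomial.natDegree_C_mul_le _ _) (by omega)
      · refine le_trans (Polynomial.natDegree_mul_le) ?_
        simp only [hd2, Polynomial.natDegree_X]
        omega
    have hd2' : (Pn α (2 * (k + 1) + 2)).natDegree = k + 1 := by
      refine Polynomial.natDegree_eq_of_le_of_coeff_ne_zero hdegle_even ?_
      rw [hcoeff_even]
      have : ((-1 : ℝ) ^ (k + 2)) ≠ 0 := by positivity
      have h2 : ((k : ℝ) + 2) ≠ 0 := by positivity
      exact mul_ne_zero (mul_ne_zero this h2) hα
    have hl2' : (Pn α (2 * (k + 1) + 2)).leadingCoeff = (-1 : ℝ) ^ (k + 2) * (k + 2) * α := by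
      rw [Polynomial.leadingCoeff, hd2', hcoeff_even]
    exact ⟨hd1', hl1', hd2', by push_cast at hl2' ⊢; convert hl2' using 2 <;> push_cast <;> ring⟩

theorem fn_leading_term
    (α ω : ℝ) (hα : 0 < α) (hω : 0 < ω) (n : ℕ) (hn : 2 ≤ n) :
    ∃ p : Polynomial ℝ,
      (∀ lam : ℝ, 0 < lam → α ^ 2 < 4 * lam →
        ∀ η : ℂ, η ≠ 0 → η ^ 2 = ((α ^ 2 / 4 - lam : ℝ) : ℂ) →
          ((-(α : ℂ) / 2 + η) ^ n - (-(α : ℂ) / 2 - η) ^ n) / (2 * η)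
            = ((p.eval lam : ℝ) : ℂ)) ∧
      (Odd n → p.natDegree = (n - 1) / 2 ∧ p.leadingCoeff = (-1 : ℝ) ^ ((n - 1) / 2)) ∧
      (Even n → p.natDegree = (n - 2) / 2 ∧
        p.leadingCoeff = (-1 : ℝ) ^ (n / 2) * (n / 2 : ℕ) * α) := by
  refine ⟨Pn α n, ?_, ?_, ?_⟩
  · intro lam _ _ η hη h
    exact Pn_eval α lam η hη h n
  · rintro ⟨k, hk⟩
    have hn' : n = 2 * k + 1 := by omega
    obtain ⟨hd, hl, -, -⟩ := Pn_deg α hα.ne' k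
    subst hn'
    constructor
    · rw [hd]; omega
    · rw [hl]; congr 1; omega
  · rintro ⟨k, hk⟩
    have hk1 : 1 ≤ k := by omega
    obtain ⟨m, hm⟩ : ∃ m, k = m + 1 := ⟨k - 1, by omega⟩
    have hn' : n = 2 * m + 2 := by omega
    obtain ⟨-, -, hd, hl⟩ := Pn_deg α hα.ne' m
    subst hn'
    constructor
    · rw [hd]; omega
    · rw [hl]
      have h1 : (2 * m + 2 - 2) / 2 = m := by omega
      have h2 : (2 * m + 2) / 2 = m + 1 := by omega
      rw [h2]
      push_cast
      ring
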